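/- Let X ∈ S^m_+, Y ∈ S^m, and μ ≥ 0. Then for every Z ∈ S^m, ‖X∘(Y∘Z) − Y∘(X∘Z)‖_F ≤ ‖X∘Y − μI‖_F · ‖Z‖_F. (That is, ‖L_X L_Y − L_Y L_X‖₂ ≤ ‖X∘Y − μI‖_F, where L_X(Z) := X∘Z and ‖·‖₂ is the operator norm induced by ‖·‖_F on S^m.) -/

import Mathlib

noncomputable def jordan {ι : Type*} [Fintype ι] (X Y : Matrix ι ι ℝ) : Matrix ι ι ℝ :=
  (2:ℝ)⁻¹ • (X * Y + Y * X)

noncomputable def frobNorm {ι : Type*} [Fintype ι] (A : Matrix ι ι ℝ) : ℝ :=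
  Real.sqrt (∑ i, ∑ j, (A i j) ^ 2)

open Matrix

attribute [local instance] Matrix.frobeniusNormedAddCommGroup Matrix.frobeniusNormedRing Matrix.frobeniusNormedSpace

private lemma jordan_comm_eq {ι : Type*} [Fintype ι] (X Y Z : Matrix ι ι ℝ) :
    jordan X (jordan Y Z) - jordan Y (jordan X Z)
      = (4:ℝ)⁻¹ • ((X*Y - Y*X)*Z - Z*(X*Y - Y*X)) := by
  simp only [jordan, smul_add, Matrix.smul_mul, Matrix.mul_smul, mul_add, add_mul,
    sub_mul, mul_sub, smul_sub, smul_smul, mul_assoc]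
  norm_num
  module

private lemma frobNorm_eq {ι : Type*} [Fintype ι] [DecidableEq ι] (A : Matrix ι ι ℝ) :
    frobNorm A = ‖A‖ := by
  rw [frobNorm, Matrix.frobenius_norm_def, Real.sqrt_eq_rpow]
  congr 1
  refine Finset.sum_congr rfl fun i _ => Finset.sum_congr rfl fun j _ => ?_
  rw [Real.norm_eq_abs, Real.rpow_two, sq_abs]

private lemma norm_sq_eq_trace {ι : Type*} [Fintype ι] [DecidableEq ι] (A : Matrix ι ι ℝ) :
    ‖A‖ ^ 2 = (Aᵀ * A).trace := by
  rw [← frobNorm_eq, frobNorm, Real.sq_sqrt (by positivity)]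
  rw [Matrix.trace]
  simp [Matrix.mul_apply, Matrix.diag, sq]
  exact Finset.sum_comm

private lemma key_trace_identity {ι : Type*} [Fintype ι] [DecidableEq ι]
    (X Y S : Matrix ι ι ℝ)
    (hXt : Xᵀ = X) (hYt : Yᵀ = Y) (hSt : Sᵀ = S) (hS : S * S = X) (μ : ℝ) :
    ‖X*Y - Y*X‖^2 + 4 * ‖S*Y*S - μ•(1 : Matrix ι ι ℝ)‖^2
      = 4 * ‖jordan X Y - μ•(1 : Matrix ι ι ℝ)‖^2 := by
  have cyc : ∀ A B : Matrix ι ι ℝ, (A*B).trace = (B*A).trace := Matrix.trace_mul_comm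
  have e3 : (Y*X).trace = (X*Y).trace := cyc Y X
  have e2 : (S*(Y*S)).trace = (X*Y).trace := by
    rw [cyc, mul_assoc, hS, cyc]
  have e4 : (Y*(X*(Y*X))).trace = (X*(Y*(X*Y))).trace := by
    rw [cyc, mul_assoc, mul_assoc]
  have e5 : (Y*(X*(X*Y))).trace = (X*(Y*(Y*X))).trace := by
    rw [cyc, mul_assoc, mul_assoc, cyc, mul_assoc, mul_assoc]
  have e1 : (S*(Y*(S*(S*(Y*S))))).trace = (X*(Y*(X*Y))).trace := by
    have h1 : S*(S*(Y*S)) = X*(Y*S) := by rw [← mul_assoc, hS]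
    rw [h1, cyc, mul_assoc, mul_assoc, mul_assoc, hS, e4]
  simp only [norm_sq_eq_trace, jordan, transpose_sub, transpose_mul, transpose_smul,
    transpose_add, transpose_one, hXt, hYt, hSt, Matrix.sub_mul, Matrix.mul_sub,
    Matrix.add_mul, Matrix.mul_add, Matrix.smul_mul, Matrix.mul_smul, smul_smul,
    Matrix.mul_one, Matrix.one_mul, trace_sub, trace_add, trace_smul, smul_eq_mul,
    mul_assoc]
  linear_combination 4 * e1 - 2 * e4 - (8:ℝ) * μ * e2 + (4:ℝ) * μ * e3

/-- ‖L_X L_Y − L_Y L_X‖₂ ≤ ‖X∘Y − μI‖_F for X psd, Y symmetric, μ ≥ 0. -/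
theorem lyapunov_commutator_opnorm_bound {m : ℕ} (X Y : Matrix (Fin m) (Fin m) ℝ)
    (hX : X.PosSemidef) (hY : Y.IsSymm) (μ : ℝ) (hμ : 0 ≤ μ) :
    ∀ Z : Matrix (Fin m) (Fin m) ℝ, Z.IsSymm →
      frobNorm (jordan X (jordan Y Z) - jordan Y (jordan X Z))
        ≤ frobNorm (jordan X Y - μ • (1 : Matrix (Fin m) (Fin m) ℝ)) * frobNorm Z := by
  intro Z hZ
  obtain ⟨S, hS, hSh⟩ : ∃ S : Matrix (Fin m) (Fin m) ℝ, S * S = X ∧ S.IsHermitian := by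
    open scoped MatrixOrder in
    exact ⟨CFC.sqrt X, CFC.sqrt_mul_sqrt_self X hX.nonneg, (CFC.sqrt_nonneg X).posSemidef.1⟩
  have hSt : Sᵀ = S := by
    have h := hSh
    simpa [Matrix.IsHermitian, Matrix.conjTranspose_eq_transpose_of_trivial] using h
  have hXt : Xᵀ = X := by
    have h := hX.1
    simpa [Matrix.IsHermitian, Matrix.conjTranspose_eq_transpose_of_trivial] using h
  have hYt : Yᵀ = Y := hY
  have key := key_trace_identity X Y S hXt hYt hSt hS μ
  set C := X*Y - Y*X with hC
  set W := jordan X Y - μ•(1 : Matrix (Fin m) (Fin m) ℝ) with hW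
  have hCW : ‖C‖ ≤ 2 * ‖W‖ := by
    nlinarith [norm_nonneg C, norm_nonneg W,
      sq_nonneg (‖S*Y*S - μ•(1 : Matrix (Fin m) (Fin m) ℝ)‖)]
  rw [jordan_comm_eq, frobNorm_eq, frobNorm_eq, frobNorm_eq]
  calc ‖(4:ℝ)⁻¹ • (C*Z - Z*C)‖ = (4:ℝ)⁻¹ * ‖C*Z - Z*C‖ := by
        rw [norm_smul, Real.norm_eq_abs]; norm_num
    _ ≤ (4:ℝ)⁻¹ * (‖C*Z‖ + ‖Z*C‖) := by
        have := norm_sub_le (C*Z) (Z*C)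
        have h2 : ‖C*Z - Z*C‖ ≤ ‖C*Z‖ + ‖Z*C‖ := norm_sub_le _ _
        nlinarith
    _ ≤ (4:ℝ)⁻¹ * (‖C‖*‖Z‖ + ‖Z‖*‖C‖) := by
        have h1 := norm_mul_le C Z
        have h2 := norm_mul_le Z C
        nlinarith
    _ = (2:ℝ)⁻¹ * ‖C‖ * ‖Z‖ := by ring
    _ ≤ ‖W‖ * ‖Z‖ := by nlinarith [norm_nonneg Z]
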